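/- Assume neutral competition α = β = 1, constant maximum tolerated dose D ≡ D₀ with γ > 1, and r_R > d_R. Let (S,R) be a solution on [0, ∞) with S(0) ≥ 0, R(0) ≥ 0 and S(0) + R(0) ≤ K. Then S(t) + R(t) ≤ K for all t ≥ 0, S(t) ≤ S(0)·exp(−d_S·t), and S(t) → 0 as t → ∞; i.e., under MTD the tumor evolves toward a state with no sensitive cells. -/

import Mathlib

open Set Filter

/-- Grönwall-type forward invariance of `{f ≤ 0}` for `f' ≤ b·f` (when `f ≥ 0`). -/
lemma aux_nonpos (f f' b : ℝ → ℝ)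
    (hd : ∀ t ∈ Set.Ici (0:ℝ), HasDerivAt f (f' t) t)
    (hb : ∀ t ∈ Set.Ici (0:ℝ), 0 ≤ f t → f' t ≤ b t * f t)
    (hbc : ∀ t ∈ Set.Ici (0:ℝ), ContinuousAt b t)
    (h0 : f 0 ≤ 0) : ∀ t ∈ Set.Ici (0:ℝ), f t ≤ 0 := by
  intro t₁ ht₁
  by_contra hpos
  push_neg at hpos
  have ht₁0 : (0:ℝ) ≤ t₁ := ht₁
  have hcont : ∀ t ∈ Set.Ici (0:ℝ), ContinuousAt f t := fun t ht => (hd t ht).continuousAt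
  set s : Set ℝ := Set.Icc 0 t₁ ∩ f ⁻¹' Set.Iic 0 with hs
  have hfc : ContinuousOn f (Set.Icc 0 t₁) := fun x hx =>
    (hcont x hx.1).continuousWithinAt
  have hsc : IsClosed s := hfc.preimage_isClosed_of_isClosed isClosed_Icc isClosed_Iic
  have hscomp : IsCompact s := isCompact_Icc.of_isClosed_subset hsc Set.inter_subset_left
  have hne : s.Nonempty := ⟨0, ⟨Set.left_mem_Icc.2 ht₁0, h0⟩⟩
  set t₀ := sSup s with ht₀def
  have ht₀s : t₀ ∈ s := hscomp.sSup_mem hne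
  have ht₀0 : (0:ℝ) ≤ t₀ := ht₀s.1.1
  have hft₀ : f t₀ ≤ 0 := ht₀s.2
  have ht₀lt : t₀ < t₁ := lt_of_le_of_ne ht₀s.1.2 (fun h => by
    rw [h] at hft₀; linarith)
  have hgt : ∀ x, t₀ < x → x ≤ t₁ → 0 < f x := by
    intro x hx hx'
    by_contra hc
    push_neg at hc
    have hxs : x ∈ s := ⟨⟨le_trans ht₀0 hx.le, hx'⟩, hc⟩
    exact absurd (le_csSup hscomp.bddAbove hxs) (not_le.2 hx)
  -- f t₀ = 0
  have hft₀0 : f t₀ = 0 := by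
    refine le_antisymm hft₀ ?_
    have htend : Tendsto f (nhdsWithin t₀ (Set.Ioi t₀)) (nhds (f t₀)) :=
      ((hcont t₀ ht₀0).tendsto).mono_left nhdsWithin_le_nhds
    refine ge_of_tendsto htend ?_
    filter_upwards [Ioo_mem_nhdsGT_of_mem ⟨le_refl t₀, ht₀lt⟩] with x hx
    exact (hgt x hx.1 hx.2.le).le
  -- bound on b
  obtain ⟨L, hL⟩ := (isCompact_Icc (a := t₀) (b := t₁)).exists_bound_of_continuousOn
    (fun x hx => (hbc x (le_trans ht₀0 hx.1)).continuousWithinAt)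
  have hfnn : ∀ x ∈ Set.Ico t₀ t₁, 0 ≤ f x := by
    intro x hx
    rcases eq_or_lt_of_le hx.1 with h | h
    · rw [← h, hft₀0]
    · exact (hgt x h hx.2.le).le
  have key := le_gronwallBound_of_liminf_deriv_right_le (f := f) (f' := f')
    (δ := 0) (K := L) (ε := 0) (a := t₀) (b := t₁)
    (hfc.mono (Set.Icc_subset_Icc_left ht₀0))
    (fun x hx r hr =>
      ((hd x (le_trans ht₀0 hx.1)).hasDerivWithinAt).liminf_right_slope_le hr)
    (by rw [hft₀0])
    (fun x hx => by
      have h1 : f' x ≤ b x * f x := hb x (le_trans ht₀0 hx.1) (hfnn x hx)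
      have h2 : b x * f x ≤ L * f x :=
        mul_le_mul_of_nonneg_right (le_trans (le_abs_self _) (hL x ⟨hx.1, hx.2.le⟩))
          (hfnn x hx)
      linarith)
  have := key t₁ ⟨ht₀lt.le, le_refl _⟩
  rw [gronwallBound_ε0_δ0] at this
  linarith

/-- under neutral competition `α = β = 1`, constant maximum
tolerated dose `D ≡ D₀` with `γ > 1`, and `r_R > d_R`, every solution on `[0,∞)`
with `S(0), R(0) ≥ 0` and `S(0)+R(0) ≤ K` satisfies `S(t)+R(t) ≤ K` and
`S(t) ≤ S(0)·exp(-d_S·t)` for all `t ≥ 0`, and `S(t) → 0` as `t → ∞`: under MTD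
the tumor evolves toward a state with no sensitive cells. -/
theorem stmt_14 (K rS rR dS dR γ : ℝ) (S R : ℝ → ℝ)
    (hK : 0 < K) (hrS : 0 < rS) (hrR : 0 < rR) (hdS : 0 < dS) (hdR : 0 < dR)
    (hγ : 1 < γ) (hrd : dR < rR)
    (hSode : ∀ t ∈ Set.Ici (0 : ℝ),
      HasDerivAt S (rS * (1 - (S t + R t) / K) * (1 - γ) * S t - dS * S t) t)
    (hRode : ∀ t ∈ Set.Ici (0 : ℝ),
      HasDerivAt R (rR * (1 - (S t + R t) / K) * R t - dR * R t) t)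
    (hS0 : 0 ≤ S 0) (hR0 : 0 ≤ R 0) (hN0 : S 0 + R 0 ≤ K) :
    (∀ t ∈ Set.Ici (0 : ℝ), S t + R t ≤ K ∧ S t ≤ S 0 * Real.exp (-dS * t)) ∧
      Filter.Tendsto S Filter.atTop (nhds 0) := by
  have hScont : ∀ t ∈ Set.Ici (0:ℝ), ContinuousAt S t := fun t ht => (hSode t ht).continuousAt
  have hRcont : ∀ t ∈ Set.Ici (0:ℝ), ContinuousAt R t := fun t ht => (hRode t ht).continuousAt
  -- S ≥ 0
  have hSnn : ∀ t ∈ Set.Ici (0:ℝ), 0 ≤ S t := by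
    have h := aux_nonpos (fun t => -S t)
      (fun t => (rS * (1 - (S t + R t) / K) * (1 - γ) - dS) * (-S t))
      (fun t => |rS * (1 - (S t + R t) / K) * (1 - γ) - dS|)
      (fun t ht => by
        have := (hSode t ht).fun_neg
        exact this.congr_deriv (by ring))
      (fun t ht hf => mul_le_mul_of_nonneg_right (le_abs_self _) hf)
      (fun t ht => by
        have h1 := hScont t ht
        have h2 := hRcont t ht
        exact (((continuousAt_const.mul (continuousAt_const.sub
          ((h1.add h2).div_const K))).mul continuousAt_const).sub continuousAt_const).abs)
      (by simpa using hS0)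
    intro t ht
    have := h t ht
    simpa using this
  -- R ≥ 0
  have hRnn : ∀ t ∈ Set.Ici (0:ℝ), 0 ≤ R t := by
    have h := aux_nonpos (fun t => -R t)
      (fun t => (rR * (1 - (S t + R t) / K) - dR) * (-R t))
      (fun t => |rR * (1 - (S t + R t) / K) - dR|)
      (fun t ht => by
        have := (hRode t ht).fun_neg
        exact this.congr_deriv (by ring))
      (fun t ht hf => mul_le_mul_of_nonneg_right (le_abs_self _) hf)
      (fun t ht => by
        have h1 := hScont t ht
        have h2 := hRcont t ht
        exact ((continuousAt_const.mul (continuousAt_const.sub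
          ((h1.add h2).div_const K))).sub continuousAt_const).abs)
      (by simpa using hR0)
    intro t ht
    have := h t ht
    simpa using this
  -- N ≤ K
  have hNK : ∀ t ∈ Set.Ici (0:ℝ), S t + R t ≤ K := by
    have h := aux_nonpos (fun t => S t + R t - K)
      (fun t => (rS * (1 - (S t + R t) / K) * (1 - γ) * S t - dS * S t)
        + (rR * (1 - (S t + R t) / K) * R t - dR * R t))
      (fun t => |rS * (1 - γ) * S t + rR * R t| / K)
      (fun t ht => ((hSode t ht).add (hRode t ht)).sub_const K)
      (fun t ht hf => by
        have hSt := hSnn t ht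
        have hRt := hRnn t ht
        set X := rS * (1 - γ) * S t + rR * R t with hX
        have hid : rS * (1 - (S t + R t) / K) * (1 - γ) * S t
            + rR * (1 - (S t + R t) / K) * R t = (-X) * (S t + R t - K) / K := by
          field_simp
          ring
        have h1 : (rS * (1 - (S t + R t) / K) * (1 - γ) * S t - dS * S t)
            + (rR * (1 - (S t + R t) / K) * R t - dR * R t)
            ≤ (-X) * (S t + R t - K) / K := by
          rw [← hid]
          have := mul_nonneg hdS.le hSt
          have := mul_nonneg hdR.le hRt
          linarith
        have h2 : (-X) * (S t + R t - K) ≤ |X| * (S t + R t - K) :=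
          mul_le_mul_of_nonneg_right (neg_le_abs X) hf
        calc (rS * (1 - (S t + R t) / K) * (1 - γ) * S t - dS * S t)
            + (rR * (1 - (S t + R t) / K) * R t - dR * R t)
            ≤ (-X) * (S t + R t - K) / K := h1
          _ ≤ |X| * (S t + R t - K) / K := by
              exact div_le_div_of_nonneg_right h2 hK.le |>.trans_eq rfl
          _ = |X| / K * (S t + R t - K) := by ring)
      (fun t ht => by
        have h1 := hScont t ht
        have h2 := hRcont t ht
        exact (((continuousAt_const.mul h1).add (continuousAt_const.mul h2)).abs).div_const K)
      (by show S 0 + R 0 - K ≤ 0; linarith)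
    intro t ht
    have := h t ht
    linarith
  -- exponential bound on S
  have hg : ∀ t ∈ Set.Ici (0:ℝ), HasDerivAt (fun t => S t * Real.exp (dS * t))
      (rS * (1 - (S t + R t) / K) * (1 - γ) * S t * Real.exp (dS * t)) t := by
    intro t ht
    have hexp : HasDerivAt (fun t => Real.exp (dS * t)) (Real.exp (dS * t) * dS) t := by
      simpa using ((hasDerivAt_id t).const_mul dS).exp
    have := (hSode t ht).fun_mul hexp
    exact this.congr_deriv (by ring)
  have hganti : AntitoneOn (fun t => S t * Real.exp (dS * t)) (Set.Ici 0) := by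
    apply antitoneOn_of_deriv_nonpos (convex_Ici 0)
    · intro x hx
      exact ((hg x hx).continuousAt).continuousWithinAt
    · intro x hx
      rw [interior_Ici] at hx
      exact (hg x (Set.mem_Ici.2 hx.le)).differentiableAt.differentiableWithinAt
    · intro x hx
      rw [interior_Ici] at hx
      rw [(hg x (Set.mem_Ici.2 hx.le)).deriv]
      have hp : 0 ≤ 1 - (S x + R x) / K := by
        have := hNK x (Set.mem_Ici.2 hx.le)
        rw [sub_nonneg, div_le_one hK]
        exact this
      have h1 : 0 ≤ rS * (1 - (S x + R x) / K) := mul_nonneg hrS.le hp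
      have h2 : rS * (1 - (S x + R x) / K) * (1 - γ) ≤ 0 :=
        mul_nonpos_of_nonneg_of_nonpos h1 (by linarith)
      have h3 : rS * (1 - (S x + R x) / K) * (1 - γ) * S x ≤ 0 :=
        mul_nonpos_of_nonpos_of_nonneg h2 (hSnn x (Set.mem_Ici.2 hx.le))
      exact mul_nonpos_of_nonpos_of_nonneg h3 (Real.exp_pos _).le
  have hSexp : ∀ t ∈ Set.Ici (0:ℝ), S t ≤ S 0 * Real.exp (-dS * t) := by
    intro t ht
    have := hganti (Set.self_mem_Ici) ht ht
    simp only [mul_zero, Real.exp_zero, mul_one] at this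
    have h2 := mul_le_mul_of_nonneg_right this (Real.exp_pos (-dS * t)).le
    rwa [mul_assoc, ← Real.exp_add, (by ring : dS * t + -dS * t = 0), Real.exp_zero,
      mul_one] at h2
  refine ⟨fun t ht => ⟨hNK t ht, hSexp t ht⟩, ?_⟩
  -- tendsto
  have hub : Tendsto (fun t => S 0 * Real.exp (-dS * t)) atTop (nhds 0) := by
    have h1 : Tendsto (fun t : ℝ => -dS * t) atTop atBot := by
      exact Tendsto.const_mul_atTop_of_neg (by linarith) tendsto_id
    have h2 : Tendsto (fun t : ℝ => Real.exp (-dS * t)) atTop (nhds 0) :=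
      Real.tendsto_exp_atBot.comp h1
    simpa using h2.const_mul (S 0)
  refine tendsto_of_tendsto_of_tendsto_of_le_of_le' tendsto_const_nhds hub ?_ ?_
  · filter_upwards [eventually_ge_atTop (0:ℝ)] with t ht using hSnn t ht
  · filter_upwards [eventually_ge_atTop (0:ℝ)] with t ht using hSexp t ht
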